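/- Let C := {X ∈ S₊^V : trace(X) = 1, X_{ij} ≥ 0 ∀ij ∈ E⁺, X_{ij} ≤ 0 ∀ij ∈ E⁻}. Then every vertex of C is of the form e_k e_kᵀ for some k ∈ V; in particular, every vertex of C has rank one. -/

import Mathlib

open Matrix

/-- The normal cone, within the space of symmetric matrices (with the trace inner
product), of a set `C` of symmetric matrices at a point `X`. -/
def normalConeM {ι : Type*} [Fintype ι] (C : Set (Matrix ι ι ℝ)) (X : Matrix ι ι ℝ) :
    Set (Matrix ι ι ℝ) :=
  {c | c.IsSymm ∧ ∀ Y ∈ C, (c * Y).trace ≤ (c * X).trace}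

/-- A point of a convex set of symmetric matrices is a vertex if its normal cone is
full-dimensional in the space `Sym(ι)` of symmetric matrices, whose dimension is
`card ι * (card ι + 1) / 2`. -/
def IsVertex {ι : Type*} [Fintype ι] (C : Set (Matrix ι ι ℝ)) (X : Matrix ι ι ℝ) : Prop :=
  X ∈ C ∧ Module.finrank ℝ (Submodule.span ℝ (normalConeM C X))
      = Fintype.card ι * (Fintype.card ι + 1) / 2

section Aux

variable {V : Type*} [Fintype V] [DecidableEq V]

lemma helper_small (g K δ : ℝ) (hδ : 0 < δ)
    (h : ∀ t : ℝ, 0 < t → t < δ → |g| ≤ t * K) : g = 0 := by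
  by_contra hg
  have h0 : 0 < |g| := abs_pos.mpr hg
  set K' : ℝ := max K 1 with hK'
  have hK'pos : 0 < K' := lt_max_of_lt_right one_pos
  set t : ℝ := min (δ / 2) (|g| / (2 * K')) with ht
  have htpos : 0 < t := lt_min (by linarith) (by positivity)
  have htδ : t < δ := lt_of_le_of_lt (min_le_left _ _) (by linarith)
  have h1 : |g| ≤ t * K := h t htpos htδ
  have h2 : t * K ≤ t * K' := mul_le_mul_of_nonneg_left (le_max_left _ _) htpos.le
  have h3 : t * K' ≤ (|g| / (2 * K')) * K' :=
    mul_le_mul_of_nonneg_right (min_le_right _ _) hK'pos.le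
  have h4 : (|g| / (2 * K')) * K' = |g| / 2 := by field_simp
  linarith

omit [DecidableEq V] in
lemma psd_smul {M : Matrix V V ℝ} (hM : M.PosSemidef) {r : ℝ} (hr : 0 ≤ r) :
    (r • M).PosSemidef := by
  refine PosSemidef.of_dotProduct_mulVec_nonneg ?_ ?_
  · show (r • M)ᴴ = r • M
    rw [conjTranspose_smul, star_trivial, hM.1.eq]
  · intro x
    rw [smul_mulVec, dotProduct_smul, smul_eq_mul]
    exact mul_nonneg hr (hM.dotProduct_mulVec_nonneg x)

lemma psd_diag_nonneg {M : Matrix V V ℝ} (hM : M.PosSemidef) (i : V) : 0 ≤ M i i := by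
  have := hM.dotProduct_mulVec_nonneg (Pi.single i 1)
  simpa [mulVec_single, single_dotProduct] using this

lemma quad_base (M : Matrix V V ℝ) (a b : V) :
    Pi.single a (1:ℝ) ⬝ᵥ (M *ᵥ Pi.single b 1) = M a b := by
  simp [mulVec_single, single_dotProduct]

lemma psd_row_zero {M : Matrix V V ℝ} (hM : M.PosSemidef) (i j : V) (hii : M i i = 0) :
    M i j = 0 := by
  rcases eq_or_ne i j with rfl | hij
  · exact hii
  have hsym : M j i = M i j := by
    have := hM.1.apply i j
    simpa using this
  by_contra hne
  set s : ℝ := -(M j j + 1) / (2 * M i j) with hs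
  set x : V → ℝ := s • (Pi.single i 1 : V → ℝ) + (Pi.single j 1 : V → ℝ) with hx
  have hq := hM.dotProduct_mulVec_nonneg x
  rw [star_trivial] at hq
  have hexp : x ⬝ᵥ (M *ᵥ x)
      = s * s * M i i + s * M i j + s * M j i + M j j := by
    rw [hx]
    simp only [mulVec_add, mulVec_smul, dotProduct_add, add_dotProduct,
      dotProduct_smul, smul_dotProduct, quad_base, smul_eq_mul]
    ring
  rw [hexp, hii, hsym] at hq
  have : s * M i j = -(M j j + 1) / 2 := by
    rw [hs]; field_simp
  nlinarith [hq]

lemma key_orth (Ep Em : Set (V × V)) (X : Matrix V V ℝ)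
    (hPSD : X.PosSemidef) (htr : X.trace = 1)
    (hEpX : ∀ e ∈ Ep, 0 ≤ X e.1 e.2) (hEmX : ∀ e ∈ Em, X e.1 e.2 ≤ 0)
    (d : V → ℝ) (hdX : ∑ i, d i * X i i = 0)
    (c : Matrix V V ℝ)
    (hopt : ∀ Y ∈ {A : Matrix V V ℝ | A.PosSemidef ∧ A.trace = 1 ∧
      (∀ e ∈ Ep, 0 ≤ A e.1 e.2) ∧ (∀ e ∈ Em, A e.1 e.2 ≤ 0)},
      (c * Y).trace ≤ (c * X).trace) :
    (c * (X * Matrix.diagonal d + Matrix.diagonal d * X)).trace = 0 := by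
  classical
  set D := Matrix.diagonal d with hD
  set Q : ℝ := ∑ i, d i * d i * X i i with hQ
  have hQ0 : 0 ≤ Q := Finset.sum_nonneg fun i _ =>
    mul_nonneg (mul_self_nonneg _) (psd_diag_nonneg hPSD i)
  set S : ℝ := ∑ i, |d i| with hS
  have hS0 : 0 ≤ S := Finset.sum_nonneg fun i _ => abs_nonneg _
  set δ : ℝ := (1 + S)⁻¹ with hδdef
  have hδ : 0 < δ := by positivity
  set β : ℝ := (c * X).trace with hβ
  set g : ℝ := (c * (X * D + D * X)).trace with hg
  set h : ℝ := (c * (D * (X * D))).trace with hh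
  have htrX : ∑ i, X i i = 1 := htr
  have main : ∀ t : ℝ, |t| < δ → t * g ≤ t * t * (β * Q - h) := by
    intro t ht
    have hfac : ∀ i, 0 < 1 + t * d i := by
      intro i
      have h1 : |t * d i| ≤ |t| * S := by
        rw [abs_mul]
        apply mul_le_mul_of_nonneg_left _ (abs_nonneg t)
        exact Finset.single_le_sum (fun j _ => abs_nonneg (d j)) (Finset.mem_univ i)
      have h2 : |t| * S ≤ δ * S := mul_le_mul_of_nonneg_right ht.le hS0
      have h3 : δ * S < 1 := by
        rw [hδdef, inv_mul_lt_iff₀ (by linarith : (0:ℝ) < 1 + S)]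
        linarith
      have h4 : |t * d i| < 1 := lt_of_le_of_lt (h1.trans h2) h3
      have := neg_lt_of_abs_lt h4
      linarith
    set Dt := Matrix.diagonal (fun i => 1 + t * d i) with hDtdef
    have hDt : Dt = 1 + t • D := by
      rw [hDtdef, hD, ← Matrix.diagonal_one, ← Matrix.diagonal_smul, ← Matrix.diagonal_add]
      rfl
    set Z := Dt * X * Dt with hZ
    have hZentry : ∀ i j, Z i j = (1 + t * d i) * X i j * (1 + t * d j) := by
      intro i j
      rw [hZ, hDtdef]
      rw [Matrix.mul_diagonal, Matrix.diagonal_mul]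
    set τ : ℝ := 1 + t * t * Q with hτ
    have hτpos : 0 < τ := by nlinarith [mul_self_nonneg t]
    have hZtr : Z.trace = τ := by
      have hzz : ∀ i, Z i i = X i i + (2 * t) * (d i * X i i)
          + (t * t) * (d i * d i * X i i) := by
        intro i; rw [hZentry]; ring
      rw [Matrix.trace]
      simp only [Matrix.diag]
      rw [Finset.sum_congr rfl fun i _ => hzz i]
      rw [Finset.sum_add_distrib, Finset.sum_add_distrib, ← Finset.mul_sum, ← Finset.mul_sum]
      rw [htrX, hdX, hτ, hQ]
      ring
    have hY : (τ⁻¹ • Z) ∈ {A : Matrix V V ℝ | A.PosSemidef ∧ A.trace = 1 ∧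
        (∀ e ∈ Ep, 0 ≤ A e.1 e.2) ∧ (∀ e ∈ Em, A e.1 e.2 ≤ 0)} := by
      refine ⟨?_, ?_, ?_, ?_⟩
      · apply psd_smul _ (inv_nonneg.mpr hτpos.le)
        have hDtH : Dtᴴ = Dt := by
          simp [hDtdef, Matrix.diagonal_conjTranspose]
        have := hPSD.mul_mul_conjTranspose_same Dt
        rwa [hDtH] at this
      · rw [Matrix.trace_smul, hZtr, smul_eq_mul, inv_mul_cancel₀ hτpos.ne']
      · intro e he
        have hx := hEpX e he
        rw [Matrix.smul_apply, hZentry, smul_eq_mul]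
        have := hfac e.1; have := hfac e.2
        have := inv_nonneg.mpr hτpos.le
        positivity
      · intro e he
        have hx := hEmX e he
        rw [Matrix.smul_apply, hZentry, smul_eq_mul]
        have h1 := hfac e.1; have h2 := hfac e.2
        have h3 : 0 < τ⁻¹ := inv_pos.mpr hτpos
        have hmid : (1 + t * d e.1) * X e.1 e.2 * (1 + t * d e.2) ≤ 0 := by
          nlinarith [mul_pos h1 h2]
        have := mul_nonneg h3.le (neg_nonneg.mpr hmid)
        nlinarith [this]
    have hineq := hopt _ hY
    have hsm : (c * (τ⁻¹ • Z)).trace = τ⁻¹ * (c * Z).trace := by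
      rw [mul_smul_comm, Matrix.trace_smul, smul_eq_mul]
    have hZexp : Z = X + t • (D * X) + t • (X * D) + (t * t) • (D * (X * D)) := by
      rw [hZ, hDt]
      simp only [add_mul, mul_add, one_mul, mul_one, smul_mul_assoc, mul_smul_comm,
        smul_add, smul_smul, Matrix.mul_assoc]
      abel
    have hCZ : (c * Z).trace = β + t * g + t * t * h := by
      rw [hZexp]
      simp only [mul_add, Matrix.trace_add, mul_smul_comm, Matrix.trace_smul, smul_eq_mul]
      have hgeq : g = (c * (X * D)).trace + (c * (D * X)).trace := by
        rw [hg, mul_add, Matrix.trace_add]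
      rw [hβ, hh, hgeq]
      ring
    rw [hsm, hCZ] at hineq
    have hexpand : β + t * g + t * t * h ≤ τ * β := by
      have heq : β + t * g + t * t * h = τ * (τ⁻¹ * (β + t * g + t * t * h)) := by
        field_simp
      rw [heq]
      exact mul_le_mul_of_nonneg_left hineq hτpos.le
    rw [hτ] at hexpand
    nlinarith [hexpand]
  apply helper_small g (|β * Q - h|) δ hδ
  intro t ht0 htδ
  have h1 := main t (by rwa [abs_of_pos ht0])
  have h2 := main (-t) (by rwa [abs_neg, abs_of_pos ht0])
  have hK : t * t * (β * Q - h) ≤ t * t * |β * Q - h| :=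
    mul_le_mul_of_nonneg_left (le_abs_self _) (mul_self_nonneg t)
  have hg1 : g ≤ t * |β * Q - h| := by
    have := h1.trans hK
    nlinarith
  have hg2 : -g ≤ t * |β * Q - h| := by
    have h2' : -t * g ≤ t * t * (β * Q - h) := by nlinarith [h2]
    have := h2'.trans hK
    nlinarith
  exact abs_le.mpr ⟨by linarith, hg1⟩

variable (V) in
/-- The submodule of symmetric matrices. -/
noncomputable def symSub : Submodule ℝ (Matrix V V ℝ) :=
  LinearMap.ker ((transposeLinearEquiv V V ℝ ℝ).toLinearMap - LinearMap.id)

omit [Fintype V] [DecidableEq V] in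
lemma mem_symSub {c : Matrix V V ℝ} : c ∈ symSub V ↔ cᵀ = c := by
  simp [symSub, LinearMap.mem_ker, sub_eq_zero]

lemma finrank_symSub_le :
    Module.finrank ℝ (symSub V) ≤ Fintype.card V * (Fintype.card V + 1) / 2 := by
  classical
  let Φ : (symSub V) →ₗ[ℝ] (Sym2 V → ℝ) :=
    { toFun := fun c => Sym2.lift ⟨fun i j => (c : Matrix V V ℝ) i j, by
        intro a b
        have h := (mem_symSub.mp c.2)
        conv_lhs => rw [← h]
        rfl⟩
      map_add' := by
        intro a b
        funext s
        induction s using Sym2.ind with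
        | _ x y => simp [Sym2.lift_mk]
      map_smul' := by
        intro r a
        funext s
        induction s using Sym2.ind with
        | _ x y => simp [Sym2.lift_mk] }
  have hinj : Function.Injective Φ := by
    intro a b hab
    ext i j
    have := congrFun hab s(i, j)
    simpa [Φ, Sym2.lift_mk] using this
  have h1 : Module.finrank ℝ (symSub V) ≤ Module.finrank ℝ (Sym2 V → ℝ) :=
    LinearMap.finrank_le_finrank_of_injective hinj
  rw [Module.finrank_fintype_fun_eq_card, Sym2.card] at h1
  rw [Nat.choose_two_right] at h1
  simpa [Nat.add_sub_cancel, Nat.mul_comm] using h1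

lemma vecMulVec_single_eq_diagonal (k : V) :
    Matrix.vecMulVec (Pi.single k (1:ℝ)) (Pi.single k 1)
      = Matrix.diagonal (Pi.single k 1) := by
  ext i j
  rw [Matrix.vecMulVec_apply]
  simp only [Matrix.diagonal_apply, Pi.single_apply]
  split_ifs <;> simp_all

end Aux

theorem theta3_vertices_rank_one {V : Type*} [Fintype V] [DecidableEq V]
    (Ep Em : Set (V × V)) (hEp : ∀ e ∈ Ep, e.1 ≠ e.2) (hEm : ∀ e ∈ Em, e.1 ≠ e.2)
    (C : Set (Matrix V V ℝ))
    (hC : C = {X | X.PosSemidef ∧ X.trace = 1 ∧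
      (∀ e ∈ Ep, 0 ≤ X e.1 e.2) ∧ (∀ e ∈ Em, X e.1 e.2 ≤ 0)}) :
    ∀ X ∈ C, IsVertex C X →
      (∃ k : V, X = Matrix.vecMulVec (Pi.single k 1) (Pi.single k 1)) ∧ X.rank = 1 := by
  classical
  intro X hXC hV
  obtain ⟨-, hdim⟩ := hV
  rw [hC] at hXC
  obtain ⟨hPSD, htr, hEpX, hEmX⟩ := hXC
  have hXs : Xᵀ = X := by
    rw [← Matrix.conjTranspose_eq_transpose_of_trivial]
    exact hPSD.1
  -- Step A: no two distinct diagonal entries can be nonzero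
  have key : ∀ p q : V, p ≠ q → X p p ≠ 0 → X q q ≠ 0 → False := by
    intro p q hpq hp hq
    have hp' : 0 < X p p := lt_of_le_of_ne (psd_diag_nonneg hPSD p) (Ne.symm hp)
    have hq' : 0 < X q q := lt_of_le_of_ne (psd_diag_nonneg hPSD q) (Ne.symm hq)
    set d : V → ℝ := fun i => if i = p then X q q else if i = q then -(X p p) else 0 with hd
    have hdX : ∑ i, d i * X i i = 0 := by
      have hsplit : ∀ i, d i * X i i =
          (if i = p then X q q * X p p else 0) + (if i = q then -(X p p * X q q) else 0) := by
        intro i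
        by_cases h1 : i = p
        · simp [hd, h1, hpq, h1 ▸ hpq]
        · by_cases h2 : i = q
          · simp [hd, h1, h2, Ne.symm hpq]
            all_goals ring
          · simp [hd, h1, h2]
      rw [Finset.sum_congr rfl fun i _ => hsplit i, Finset.sum_add_distrib,
        Finset.sum_ite_eq' Finset.univ p, Finset.sum_ite_eq' Finset.univ q]
      simp
      ring
    set D := Matrix.diagonal d with hD
    set G := X * D + D * X with hG
    have horth : ∀ cc ∈ normalConeM C X, (cc * G).trace = 0 := by
      intro cc hcc
      have := key_orth Ep Em X hPSD htr hEpX hEmX d hdX cc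
      apply this
      intro Y hY
      exact hcc.2 Y (by rw [hC]; exact hY)
    have hGs : Gᵀ = G := by
      rw [hG, Matrix.transpose_add, Matrix.transpose_mul, Matrix.transpose_mul,
        Matrix.diagonal_transpose, hXs]
      abel
    have hGpp : G p p = 2 * (X q q * X p p) := by
      rw [hG, Matrix.add_apply, Matrix.mul_diagonal, Matrix.diagonal_mul]
      have : d p = X q q := by simp [hd]
      rw [this]; ring
    have hGpp' : 0 < G p p := by rw [hGpp]; positivity
    have hGG : 0 < (G * G).trace := by
      have hdiagt : (G * G).trace = ∑ i, ∑ j, G i j * G j i := by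
        simp [Matrix.trace, Matrix.diag, Matrix.mul_apply]
      rw [hdiagt]
      have hsymG : ∀ i j, G j i = G i j := by
        intro i j
        conv_lhs => rw [← hGs]
        rfl
      refine Finset.sum_pos' (fun i _ => Finset.sum_nonneg fun j _ => ?_)
        ⟨p, Finset.mem_univ p, ?_⟩
      · rw [hsymG]; exact mul_self_nonneg _
      · refine Finset.sum_pos' (fun j _ => ?_) ⟨p, Finset.mem_univ p, ?_⟩
        · rw [hsymG]; exact mul_self_nonneg _
        · exact mul_pos hGpp' hGpp'
    -- the linear functional w ↦ trace (w * G)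
    set φ : Matrix V V ℝ →ₗ[ℝ] ℝ :=
      (Matrix.traceLinearMap V ℝ ℝ).comp (LinearMap.mulRight ℝ G) with hφ
    set W := Submodule.span ℝ (normalConeM C X) with hW
    have horthW : ∀ w ∈ W, (w * G).trace = 0 := by
      intro w hw
      have hker : W ≤ LinearMap.ker φ := by
        rw [hW, Submodule.span_le]
        intro cc hcc
        simp only [SetLike.mem_coe, LinearMap.mem_ker, hφ, LinearMap.comp_apply,
          LinearMap.mulRight_apply, Matrix.traceLinearMap_apply]
        exact horth cc hcc
      have := hker hw
      simpa [hφ, LinearMap.mem_ker, LinearMap.comp_apply, LinearMap.mulRight_apply,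
        Matrix.traceLinearMap_apply] using this
    have hGW : G ∉ W := by
      intro hmem
      have := horthW G hmem
      exact hGG.ne' this
    have hWsym : W ≤ symSub V := by
      rw [hW, Submodule.span_le]
      intro cc hcc
      exact mem_symSub.mpr hcc.1
    have hGsym : G ∈ symSub V := mem_symSub.mpr hGs
    have hlt : W < W ⊔ Submodule.span ℝ {G} := by
      refine lt_of_le_of_ne le_sup_left fun heq => hGW ?_
      rw [heq]
      exact Submodule.mem_sup_right (Submodule.mem_span_singleton_self G)
    have hle : W ⊔ Submodule.span ℝ {G} ≤ symSub V :=
      sup_le hWsym (Submodule.span_le.mpr (Set.singleton_subset_iff.mpr hGsym))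
    have h1 : Module.finrank ℝ W < Module.finrank ℝ ↥(W ⊔ Submodule.span ℝ {G}) :=
      Submodule.finrank_lt_finrank_of_lt hlt
    have h2 : Module.finrank ℝ ↥(W ⊔ Submodule.span ℝ {G}) ≤ Module.finrank ℝ (symSub V) :=
      Submodule.finrank_mono hle
    have h3 := finrank_symSub_le (V := V)
    omega
  -- Step B: conclude the structure of X
  have hdnn : ∀ i, 0 ≤ X i i := psd_diag_nonneg hPSD
  have htrX : ∑ i, X i i = 1 := htr
  have hex : ∃ k, X k k ≠ 0 := by
    by_contra hc
    push_neg at hc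
    rw [Finset.sum_congr rfl fun i _ => hc i] at htrX
    simp at htrX
  obtain ⟨k, hk⟩ := hex
  have huniq : ∀ i, i ≠ k → X i i = 0 := by
    intro i hi
    by_contra hne
    exact key i k hi hne hk
  have hXkk : X k k = 1 := by
    have : ∑ i, X i i = X k k := by
      apply Finset.sum_eq_single k
      · intro b _ hb; exact huniq b hb
      · intro hk'; exact absurd (Finset.mem_univ k) hk'
    rw [this] at htrX
    exact htrX
  have hsymX : ∀ i j, X i j = X j i := by
    intro i j
    have h := Matrix.transpose_apply X i j
    rw [hXs] at h
    exact h
  have hform : X = Matrix.vecMulVec (Pi.single k 1) (Pi.single k 1) := by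
    ext i j
    rw [Matrix.vecMulVec_apply]
    by_cases hi : i = k
    · subst hi
      by_cases hj : j = i
      · subst hj
        rw [Pi.single_eq_same, hXkk, one_mul]
      · have h0 : X j i = 0 := psd_row_zero hPSD j i (huniq j hj)
        rw [hsymX i j, h0]
        simp [Pi.single_eq_of_ne hj]
    · have h0 : X i j = 0 := psd_row_zero hPSD i j (huniq i hi)
      rw [h0]
      simp [Pi.single_eq_of_ne hi]
  refine ⟨⟨k, hform⟩, ?_⟩
  have hcard : Fintype.card {i // (Pi.single k 1 : V → ℝ) i ≠ 0} = 1 := by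
    rw [Fintype.card_eq_one_iff]
    refine ⟨⟨k, by simp⟩, ?_⟩
    rintro ⟨i, hi⟩
    apply Subtype.ext
    show i = k
    by_contra h
    exact hi (Pi.single_eq_of_ne h 1)
  rw [hform, vecMulVec_single_eq_diagonal, Matrix.rank_diagonal]
  convert hcard
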